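/- In the group G(2e,e,3) with e ≥ 2 (triples (a,b,c | σ), a,b,c ∈ Z_{2e}, a+b+c ≡ 0 mod e, σ ∈ S_3), let t = (e,0,0 | id), s = (-1,1,0 | (1 2)), r_1 = (0,0,0 | (1 2)), r_2 = (0,0,0 | (2 3)). Then the element t s r_1 r_2 = (e-1, 1, 0 | (2 3)) has order 4e, with (t s r_1 r_2)^{2i} = (i(2e-2), i, i | id) and (t s r_1 r_2)^{2i+1} = (i(2e-2)+e-1, i+1, i | (2 3)). -/

import Mathlib

/-- The wreath product `ZMod m ≀ Sₙ`: elements `(a | σ)` with `a : Fin n → ZMod m`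
and `σ` a permutation of `{1,…,n}` (i.e. of `Fin n`). -/
structure W (m n : ℕ) : Type where
  a : Fin n → ZMod m
  p : Equiv.Perm (Fin n)

namespace W

lemma ext' {m n : ℕ} {x y : W m n} (h1 : x.a = y.a) (h2 : x.p = y.p) : x = y := by
  cases x; cases y; cases h1; cases h2; rfl

instance (m n : ℕ) : Mul (W m n) :=
  ⟨fun x y => ⟨fun i => x.a i + y.a (x.p i), y.p * x.p⟩⟩

instance (m n : ℕ) : One (W m n) := ⟨⟨0, 1⟩⟩

instance (m n : ℕ) : Inv (W m n) :=
  ⟨fun x => ⟨fun i => -(x.a (x.p.symm i)), x.p⁻¹⟩⟩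

lemma mul_def {m n : ℕ} (x y : W m n) :
    x * y = ⟨fun i => x.a i + y.a (x.p i), y.p * x.p⟩ := rfl

lemma one_def {m n : ℕ} : (1 : W m n) = ⟨0, 1⟩ := rfl

lemma inv_def {m n : ℕ} (x : W m n) :
    x⁻¹ = ⟨fun i => -(x.a (x.p.symm i)), x.p⁻¹⟩ := rfl

/-- The wreath product group structure, with multiplication
`(a | σ)(b | τ) = (aᵢ + b_{σ(i)} | στ)` (where `στ` means: apply `σ` first). -/
instance (m n : ℕ) : Group (W m n) where
  mul_assoc x y z := by
    refine ext' (funext fun i => ?_) ?_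
    · show (x.a i + y.a (x.p i)) + z.a ((y.p * x.p) i)
        = x.a i + (y.a (x.p i) + z.a (y.p (x.p i)))
      simp [Equiv.Perm.mul_apply, add_assoc]
    · show (z.p * (y.p * x.p)) = (z.p * y.p) * x.p
      exact (mul_assoc _ _ _).symm
  one_mul x := by
    refine ext' (funext fun i => ?_) ?_
    · show 0 + x.a ((1 : Equiv.Perm (Fin _)) i) = x.a i; simp
    · show x.p * 1 = x.p; simp
  mul_one x := by
    refine ext' (funext fun i => ?_) ?_
    · show x.a i + 0 = x.a i; simp
    · show 1 * x.p = x.p; simp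
  inv_mul_cancel x := by
    refine ext' (funext fun i => ?_) ?_
    · simp [mul_def, inv_def, one_def, Equiv.Perm.inv_def]
    · simp [mul_def, inv_def, one_def, Equiv.Perm.inv_def]; exact mul_inv_cancel x.p

end W

/-- The subgroup of `ZMod m ≀ Sₙ` of elements whose diagonal entries sum to `0 mod e`.
For `m = d*e` this is the imprimitive complex reflection group `G(de,e,n)`. -/
def Gsub (m e n : ℕ) (h : e ∣ m) : Subgroup (W m n) where
  carrier := {x | ZMod.castHom h (ZMod e) (∑ i, x.a i) = 0}
  one_mem' := by simp [W.one_def]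
  mul_mem' := by
    intro x y hx hy
    show ZMod.castHom h (ZMod e) (∑ i, (x.a i + y.a (x.p i))) = 0
    rw [Finset.sum_add_distrib, Equiv.sum_comp x.p y.a, map_add]
    rw [Set.mem_setOf_eq] at hx hy
    rw [hx, hy, add_zero]
  inv_mem' := by
    intro x hx
    show ZMod.castHom h (ZMod e) (∑ i, -(x.a (x.p.symm i))) = 0
    rw [Finset.sum_neg_distrib, Equiv.sum_comp x.p.symm x.a, map_neg]
    rw [Set.mem_setOf_eq] at hx
    rw [hx, neg_zero]

lemma mem_Gsub {m e n : ℕ} (h : e ∣ m) (x : W m n) :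
    x ∈ Gsub m e n h ↔ ZMod.castHom h (ZMod e) (∑ i, x.a i) = 0 := Iff.rfl

/-- The imprimitive complex reflection group `G(de,e,n)`. -/
abbrev Gde (d e n : ℕ) : Subgroup (W (d * e) n) := Gsub (d * e) e n (dvd_mul_left e d)

/-- A Hamiltonian cycle in the (undirected, right) Cayley graph `Γ(G,S)`,
encoded as the list of edge labels (from `S ∪ S⁻¹`) along the cycle starting at `1`:
the partial products visit every element of `G` exactly once and the
total product returns to `1`. -/
def IsHamCycle {G : Type*} [Group G] (S : Set G) (l : List G) : Prop :=
  (∀ x ∈ l, x ∈ S ∨ x⁻¹ ∈ S) ∧ l.prod = 1 ∧ l.length = Nat.card G ∧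
    ((List.range l.length).map fun k => (l.take k).prod).Nodup


/-- from Lemma 4.6. In `G(2e,e,3)` with `e ≥ 2`, with
`t = (e,0,0 | id)`, `s = (-1,1,0 | (1 2))`, `r₁ = (0,0,0 | (1 2))`,
`r₂ = (0,0,0 | (2 3))`, the element `t s r₁ r₂ = (e-1, 1, 0 | (2 3))` has order `4e`,
with `(t s r₁ r₂)^(2i) = (i(2e-2), i, i | id)` and
`(t s r₁ r₂)^(2i+1) = (i(2e-2)+e-1, i+1, i | (2 3))` for `0 ≤ i < 2e`. -/
theorem stmt10 (e : ℕ) (he : 2 ≤ e)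
    (t s r₁ r₂ : Gde 2 e 3)
    (ht : (t : W (2 * e) 3) = ⟨![(e : ZMod (2 * e)), 0, 0], 1⟩)
    (hs : (s : W (2 * e) 3) = ⟨![-1, 1, 0], Equiv.swap 0 1⟩)
    (hr₁ : (r₁ : W (2 * e) 3) = ⟨![0, 0, 0], Equiv.swap 0 1⟩)
    (hr₂ : (r₂ : W (2 * e) 3) = ⟨![0, 0, 0], Equiv.swap 1 2⟩) :
    ((t * s * r₁ * r₂ : Gde 2 e 3) : W (2 * e) 3)
      = ⟨![(e : ZMod (2 * e)) - 1, 1, 0], Equiv.swap 1 2⟩ ∧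
    orderOf (t * s * r₁ * r₂) = 4 * e ∧
    (∀ i < 2 * e, (((t * s * r₁ * r₂) ^ (2 * i) : Gde 2 e 3) : W (2 * e) 3)
      = ⟨![((i * (2 * e - 2) : ℕ) : ZMod (2 * e)), (i : ZMod (2 * e)),
          (i : ZMod (2 * e))], 1⟩) ∧
    (∀ i < 2 * e, (((t * s * r₁ * r₂) ^ (2 * i + 1) : Gde 2 e 3) : W (2 * e) 3)
      = ⟨![((i * (2 * e - 2) : ℕ) : ZMod (2 * e)) + (e : ZMod (2 * e)) - 1,
          (i : ZMod (2 * e)) + 1, (i : ZMod (2 * e))], Equiv.swap 1 2⟩) := by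
  haveI : NeZero (2 * e) := ⟨by omega⟩
  set g := t * s * r₁ * r₂ with hg
  have he0 : (e : ZMod (2 * e)) + e = 0 := by
    have h := ZMod.natCast_self (2 * e)
    push_cast at h
    linear_combination h
  have hE : (e : ZMod (2 * e)) * 2 = 0 := by linear_combination he0
  have hX : ((2 * e - 2 : ℕ) : ZMod (2 * e)) = -2 := by
    rw [Nat.cast_sub (by omega)]
    push_cast
    linear_combination he0
  have key2 : ∀ k : ℕ, k = 2 * e - 2 → ((k : ℕ) : ZMod (2 * e)) = -2 := by
    rintro k rfl; exact hX
  have hX' := key2 (e * 2 - 2) (by omega)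
  have hX'' := key2 (e + e - 2) (by omega)
  -- coercion of g
  have hgW : ((g : Gde 2 e 3) : W (2 * e) 3)
      = ⟨![(e : ZMod (2 * e)) - 1, 1, 0], Equiv.swap 1 2⟩ := by
    rw [hg]
    simp only [Subgroup.coe_mul]
    rw [ht, hs, hr₁, hr₂]
    refine W.ext' (funext fun i => ?_) ?_
    · fin_cases i <;>
        simp [W.mul_def, Equiv.swap_apply_def, sub_eq_add_neg] <;>
        linear_combination -he0
    · simp only [W.mul_def]
      decide
  set w : W (2 * e) 3 := ⟨![(e : ZMod (2 * e)) - 1, 1, 0], Equiv.swap 1 2⟩ with hw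
  -- even powers of w
  have keven : ∀ i : ℕ, w ^ (2 * i)
      = ⟨![((i * (2 * e - 2) : ℕ) : ZMod (2 * e)), (i : ZMod (2 * e)),
          (i : ZMod (2 * e))], 1⟩ := by
    intro i
    induction i with
    | zero =>
      refine W.ext' (funext fun j => ?_) ?_
      · fin_cases j <;> simp [W.one_def]
      · simp [W.one_def]
    | succ i ih =>
      have h2 : 2 * (i + 1) = 2 * i + 1 + 1 := by ring
      rw [h2, pow_succ, pow_succ, ih]
      refine W.ext' (funext fun j => ?_) ?_
      · fin_cases j <;>
          simp [W.mul_def, hw, Equiv.swap_apply_def, Nat.succ_mul, Nat.cast_add,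
            hX, hX', hX''] <;>
          linear_combination hE
      · simp only [W.mul_def]
        refine Equiv.ext fun j => ?_
        fin_cases j <;> simp [Equiv.swap_apply_def, hw]
  have kodd : ∀ i : ℕ, w ^ (2 * i + 1)
      = ⟨![((i * (2 * e - 2) : ℕ) : ZMod (2 * e)) + (e : ZMod (2 * e)) - 1,
          (i : ZMod (2 * e)) + 1, (i : ZMod (2 * e))], Equiv.swap 1 2⟩ := by
    intro i
    rw [pow_succ, keven i]
    refine W.ext' (funext fun j => ?_) ?_
    · fin_cases j <;>
        simp [W.mul_def, hw, Equiv.swap_apply_def, sub_eq_add_neg] <;>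
        ring
    · simp [W.mul_def, hw]
  have hpow : ∀ n : ℕ, ((g ^ n : Gde 2 e 3) : W (2 * e) 3) = w ^ n := by
    intro n
    rw [SubgroupClass.coe_pow, hgW]
  refine ⟨hgW, ?_, fun i _ => by rw [hpow, keven], fun i _ => by rw [hpow, kodd]⟩
  -- order
  rw [orderOf_eq_iff (by omega : 0 < 4 * e)]
  constructor
  · apply Subtype.ext
    rw [Subgroup.coe_one, hpow]
    have h4 : 4 * e = 2 * (2 * e) := by ring
    rw [h4, keven]
    have hz : ((2 * e * (2 * e - 2) : ℕ) : ZMod (2 * e)) = 0 := by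
      rw [Nat.cast_mul, ZMod.natCast_self, zero_mul]
    refine W.ext' (funext fun j => ?_) ?_
    · fin_cases j <;> simp [W.one_def, hz]
    · rfl
  · intro m hm hm0 hcon
    have hW : ((g ^ m : Gde 2 e 3) : W (2 * e) 3) = (1 : W (2 * e) 3) := by
      rw [hcon]; rfl
    rw [hpow] at hW
    rcases Nat.even_or_odd m with ⟨i, hi⟩ | ⟨i, hi⟩
    · have h2i : m = 2 * i := by omega
      rw [h2i, keven] at hW
      have ha := congrArg (fun x => x.a 1) hW
      simp [W.one_def] at ha
      rw [ZMod.natCast_eq_zero_iff] at ha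
      have h0 := Nat.eq_zero_of_dvd_of_lt ha (by omega)
      omega
    · rw [hi, kodd] at hW
      have hp := congrArg (fun x => x.p 1) hW
      simp [W.one_def, Equiv.swap_apply_def] at hp
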